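/- In the setting of Proposition 5.2's proof: let C be a smooth projective curve, M base point free with h^0(M)=2, L a line bundle with h^0(L)=r+1, and suppose 2·h^0(K−L−M) − h^0(K−L−2M) = h^0(K−L) (a numerical condition equivalent to dim(s·H^0(K−L−M)+t·H^0(K−L−M)) = h^0(K−L)). Then s·H^0(C,K−L−M) + t·H^0(C,K−L−M) = H^0(C,K−L), and consequently the image of the Petri map of L is contained in the image of the Petri map of L+M: im(μ_L) ⊆ im(μ_{L+M}). -/
import Mathlib


/-- core of the proof of Proposition 5.2.  Section-ring model: `s, t` is a
basis of `H⁰(M)` for a base point free pencil `M` (base point freeness recorded by the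
divisibility property `hbpf`), and the `F`-subspaces of the integral section ring `R` are
`H0L = H⁰(L)`, `H0KL = H⁰(K-L)`, `H0LM = H⁰(L+M)`, `H0KLM = H⁰(K-L-M)`,
`H0KL2M = H⁰(K-L-2M)`.  If `2 h⁰(K-L-M) - h⁰(K-L-2M) = h⁰(K-L)` then
`s·H⁰(K-L-M) + t·H⁰(K-L-M) = H⁰(K-L)`, and consequently the image of the Petri map of `L`
is contained in that of `L+M`: `im μ_L = H⁰(L)·H⁰(K-L) ⊆ H⁰(L+M)·H⁰(K-L-M) = im μ_{L+M}`. -/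
theorem stmt13 (F R : Type*) [Field F] [CommRing R] [IsDomain R] [Algebra F R]
    (H0M H0L H0KL H0LM H0KLM H0KL2M : Submodule F R)
    [FiniteDimensional F H0KL] [FiniteDimensional F H0KLM] [FiniteDimensional F H0KL2M]
    (s t : R) (hs : s ∈ H0M) (ht : t ∈ H0M)
    (hli : LinearIndependent F ![s, t]) (hspan : Submodule.span F {s, t} = H0M)
    (r : ℕ) (h0L : Module.finrank F H0L = r + 1)
    (hmul₁ : ∀ y ∈ H0KLM, s * y ∈ H0KL ∧ t * y ∈ H0KL)
    (hmul₂ : ∀ y ∈ H0KL2M, s * y ∈ H0KLM ∧ t * y ∈ H0KLM)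
    (hmulL : ∀ x ∈ H0L, s * x ∈ H0LM ∧ t * x ∈ H0LM)
    (hbpf : ∀ y ∈ H0KLM, ∀ z ∈ H0KLM, s * y = t * z →
      ∃ w ∈ H0KL2M, y = t * w ∧ z = s * w)
    (hnum : 2 * Module.finrank F H0KLM =
      Module.finrank F H0KL + Module.finrank F H0KL2M) :
    (H0KLM.map (LinearMap.mulLeft F s) ⊔ H0KLM.map (LinearMap.mulLeft F t) = H0KL) ∧
      H0L * H0KL ≤ H0LM * H0KLM := by
  have hs0 : s ≠ 0 := by
    have := hli.ne_zero 0; simpa using this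
  have ht0 : t ≠ 0 := by
    have := hli.ne_zero 1; simpa using this
  set A := H0KLM.map (LinearMap.mulLeft F s) with hA
  set B := H0KLM.map (LinearMap.mulLeft F t) with hB
  have hinj : ∀ c : R, c ≠ 0 → Function.Injective (LinearMap.mulLeft F c) := by
    intro c hc a b h
    simp only [LinearMap.mulLeft_apply] at h
    exact mul_left_cancel₀ hc h
  have hAle : A ≤ H0KL := by
    rintro x ⟨y, hy, rfl⟩
    exact (hmul₁ y hy).1
  have hBle : B ≤ H0KL := by
    rintro x ⟨y, hy, rfl⟩
    exact (hmul₁ y hy).2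
  have hsuple : A ⊔ B ≤ H0KL := sup_le hAle hBle
  have hrA : Module.finrank F A = Module.finrank F H0KLM :=
    (LinearEquiv.finrank_eq (Submodule.equivMapOfInjective _ (hinj s hs0) H0KLM)).symm
  have hrB : Module.finrank F B = Module.finrank F H0KLM :=
    (LinearEquiv.finrank_eq (Submodule.equivMapOfInjective _ (hinj t ht0) H0KLM)).symm
  have hinfle : A ⊓ B ≤ H0KL2M.map (LinearMap.mulLeft F (s * t)) := by
    rintro x ⟨⟨y, hy, rfl⟩, ⟨z, hz, hzx⟩⟩
    simp only [LinearMap.mulLeft_apply] at hzx ⊢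
    obtain ⟨w, hw, hyw, hzw⟩ := hbpf y hy z hz hzx.symm
    exact ⟨w, hw, by rw [LinearMap.mulLeft_apply, hyw]; ring⟩
  have hstfin : FiniteDimensional F (H0KL2M.map (LinearMap.mulLeft F (s * t))) :=
    Module.Finite.map _ _
  have hAfin : FiniteDimensional F A := Module.Finite.map _ _
  have hBfin : FiniteDimensional F B := Module.Finite.map _ _
  have hsupfin : FiniteDimensional F (A ⊔ B : Submodule F R) :=
    Submodule.finiteDimensional_of_le hsuple
  have hrinf : Module.finrank F (A ⊓ B : Submodule F R) ≤ Module.finrank F H0KL2M := by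
    calc Module.finrank F (A ⊓ B : Submodule F R)
        ≤ Module.finrank F (H0KL2M.map (LinearMap.mulLeft F (s * t))) :=
          Submodule.finrank_mono hinfle
      _ = Module.finrank F H0KL2M :=
          (LinearEquiv.finrank_eq (Submodule.equivMapOfInjective _
            (hinj (s * t) (mul_ne_zero hs0 ht0)) H0KL2M)).symm
  have hdim : Module.finrank F (A ⊔ B : Submodule F R) +
      Module.finrank F (A ⊓ B : Submodule F R) =
      Module.finrank F A + Module.finrank F B :=
    Submodule.finrank_sup_add_finrank_inf_eq A B
  have hge : Module.finrank F H0KL ≤ Module.finrank F (A ⊔ B : Submodule F R) := by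
    omega
  have hmain : A ⊔ B = H0KL := Submodule.eq_of_le_of_finrank_le hsuple hge
  refine ⟨hmain, ?_⟩
  rw [Submodule.mul_le]
  intro x hx y hy
  rw [← hmain] at hy
  obtain ⟨a, ha, b, hb, rfl⟩ := Submodule.mem_sup.mp hy
  obtain ⟨y1, hy1, rfl⟩ := ha
  obtain ⟨y2, hy2, rfl⟩ := hb
  simp only [LinearMap.mulLeft_apply]
  have : x * (s * y1 + t * y2) = (s * x) * y1 + (t * x) * y2 := by ring
  rw [this]
  exact Submodule.add_mem _
    (Submodule.mul_mem_mul (hmulL x hx).1 hy1)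
    (Submodule.mul_mem_mul (hmulL x hx).2 hy2)
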